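/- arXiv:1811.05936 — 4 statements merged into one kernel-verified Lean document; each statement's English description precedes it below -/
import Mathlib

section
/- Let G be a finite group, let σ : G → Sym(G) and λ : G → Sym(G) be, respectively, the right and the left regular representations of G, and let H ≤ G. Then the centraliser in Sym(G) of the image H^σ of H under the right regular representation equals the natural image in Sym(G) of the permutational wreath product H^λ ≀ Sym(G/H), where G/H denotes the set of left cosets of H in G (the base group H^λ acting independently on each left coset and Sym(G/H) permuting the cosets). -/
open Equiv

/-- The image `H^σ` of a subgroup `H ≤ G` under the right regular representation
`σ : G → Sym(G)`, `g ↦ (x ↦ x * g)`. -/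
def rightRegImage {G : Type*} [Group G] (H : Subgroup G) : Subgroup (Equiv.Perm G) where
  carrier := {f | ∃ h ∈ H, ∀ x, f x = x * h}
  one_mem' := ⟨1, H.one_mem, fun x => by simp⟩
  mul_mem' := by
    rintro a b ⟨h, hh, ha⟩ ⟨h', hh', hb⟩
    exact ⟨h' * h, H.mul_mem hh' hh, fun x => by
      simp [Equiv.Perm.mul_apply, ha, hb, mul_assoc]⟩
  inv_mem' := by
    rintro a ⟨h, hh, ha⟩
    refine ⟨h⁻¹, H.inv_mem hh, fun x => a.injective ?_⟩
    rw [← Equiv.Perm.mul_apply, mul_inv_cancel, Equiv.Perm.one_apply, ha, inv_mul_cancel_right]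

/-- The natural image in `Sym(G)` of the permutational wreath product
`H^λ ≀ Sym(G/H)` acting imprimitively on `G`, with blocks the left cosets of `H`:
writing each element of `G` as `q.out * h` with `q` a left coset and `h ∈ H`, an
element of the wreath product sends `q.out * h` to `(π q).out * (b q * h)`, where
`π` permutes the left cosets and `b q ∈ H` acts on the block `q` as an element of
the image `H^λ` of the left regular representation of `H`. -/
def wreathProductImage {G : Type*} [Group G] (H : Subgroup G) : Subgroup (Equiv.Perm G) where
  carrier := {f | ∃ (π : Equiv.Perm (G ⧸ H)) (b : G ⧸ H → H),
    ∀ (q : G ⧸ H) (h : H), f (q.out * h) = (π q).out * ((b q * h : H) : G)}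
  one_mem' := ⟨1, fun _ => 1, fun q h => by simp⟩
  mul_mem' := by
    rintro f f' ⟨π, b, hf⟩ ⟨π', b', hf'⟩
    refine ⟨π * π', fun q => b (π' q) * b' q, fun q h => ?_⟩
    rw [Equiv.Perm.mul_apply, hf', hf, Equiv.Perm.mul_apply, mul_assoc]
  inv_mem' := by
    rintro f ⟨π, b, hf⟩
    refine ⟨π⁻¹, fun q => (b (π⁻¹ q))⁻¹, fun q h => f.injective ?_⟩
    rw [← Equiv.Perm.mul_apply, mul_inv_cancel, Equiv.Perm.one_apply, hf, ← Equiv.Perm.mul_apply,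
      mul_inv_cancel, Equiv.Perm.one_apply, mul_inv_cancel_left]

/-- The centraliser in `Sym(G)` of the image `H^σ` of `H` under the right regular
representation equals the natural image in `Sym(G)` of the permutational wreath
product `H^λ ≀ Sym(G/H)`, where `G/H` is the set of left cosets of `H` in `G`. -/
theorem centralizer_rightRegImage_eq_wreathProductImage
    (G : Type*) [Group G] [Finite G] (H : Subgroup G) :
    Subgroup.centralizer (rightRegImage H : Set (Equiv.Perm G)) = wreathProductImage H := by
  ext f
  simp only [Subgroup.mem_centralizer_iff]
  constructor
  · intro hc
    have key : ∀ (h : H) (x : G), f (x * h) = f x * h := by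
      intro h x
      have hm : Equiv.mulRight (h : G) ∈ (rightRegImage H : Set (Equiv.Perm G)) :=
        ⟨h, h.2, fun x => rfl⟩
      have := Equiv.ext_iff.mp (hc _ hm) x
      simpa [Equiv.Perm.mul_apply] using this.symm
    have hinj : Function.Injective
        (fun q : G ⧸ H => (QuotientGroup.mk (f q.out) : G ⧸ H)) := by
      intro q r hqr
      have hmem : (f q.out)⁻¹ * f r.out ∈ H := (QuotientGroup.eq).mp hqr
      have : f r.out = f (q.out * ((⟨(f q.out)⁻¹ * f r.out, hmem⟩ : H) : G)) := by
        rw [key ⟨_, hmem⟩ q.out]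
        simp [mul_inv_cancel_left]
      have hro : r.out = q.out * ((f q.out)⁻¹ * f r.out) := by
        have := f.injective this
        simpa using this
      calc q = QuotientGroup.mk q.out := (QuotientGroup.out_eq' q).symm
        _ = QuotientGroup.mk r.out := (QuotientGroup.eq).mpr (by rw [hro]; simpa using hmem)
        _ = r := QuotientGroup.out_eq' r
    let π : Equiv.Perm (G ⧸ H) := Equiv.ofBijective _ (Finite.injective_iff_bijective.mp hinj)
    have hπ : ∀ q : G ⧸ H, π q = QuotientGroup.mk (f q.out) := fun q => rfl
    have hbm : ∀ q : G ⧸ H, (π q).out⁻¹ * f q.out ∈ H := by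
      intro q
      refine (QuotientGroup.eq).mp ?_
      rw [QuotientGroup.out_eq', hπ]
    refine ⟨π, fun q => ⟨(π q).out⁻¹ * f q.out, hbm q⟩, fun q h => ?_⟩
    push_cast
    rw [key]
    group
  · rintro ⟨π, b, hf⟩ p ⟨h, hh, hp⟩
    ext x
    have hx : QuotientGroup.mk x = (QuotientGroup.mk x : G ⧸ H) := rfl
    set q : G ⧸ H := QuotientGroup.mk x with hq
    have hkm : q.out⁻¹ * x ∈ H := (QuotientGroup.eq).mp (QuotientGroup.out_eq' q)
    have hxq : x = q.out * ((⟨q.out⁻¹ * x, hkm⟩ : H) : G) := by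
      simp [mul_inv_cancel_left]
    have hfx : ∀ (k : H), f (x * k) = f x * k := by
      intro k
      have h1 : x * (k : G) = q.out * (((⟨q.out⁻¹ * x, hkm⟩ : H) * k : H) : G) := by
        push_cast; group
      rw [h1, hf]
      conv_rhs => rw [hxq, hf]
      push_cast
      group
    simp only [Equiv.Perm.mul_apply, hp]
    rw [hfx ⟨h, hh⟩]
end

section
/- Let n > 2, let V = 𝔽₂ⁿ, let 0 ≤ m ≤ n, and let M be a subgroup of the translation group T of order 2^{n−m}. Then the centraliser of M in Sym(V) has order (2^m)! · 2^{2^m (n−m)}. -/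
open Equiv

/-- `V n` is the `n`-dimensional vector space over the field with two elements. -/
abbrev V (n : ℕ) : Type := Fin n → ZMod 2

/-- The subgroup `σ_W` of `Sym(V)` consisting of the translations `x ↦ x + w` with `w ∈ W`. -/
def sigmaSub (n : ℕ) (W : Submodule (ZMod 2) (V n)) : Subgroup (Equiv.Perm (V n)) where
  carrier := {g | ∃ v ∈ W, ∀ x, g x = x + v}
  one_mem' := ⟨0, W.zero_mem, fun x => by simp⟩
  mul_mem' := by
    rintro a b ⟨v, hv, ha⟩ ⟨w, hw, hb⟩
    exact ⟨w + v, W.add_mem hw hv, fun x => by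
      simp [Equiv.Perm.mul_apply, ha, hb, add_assoc]⟩
  inv_mem' := by
    rintro a ⟨v, hv, ha⟩
    refine ⟨-v, W.neg_mem hv, fun x => a.injective ?_⟩
    rw [Equiv.Perm.coe_inv, Equiv.apply_symm_apply, ha]
    abel

/-- The translation group `T`, i.e. the image of the right regular representation
of `(V, +)` in `Sym(V)`. -/
def T (n : ℕ) : Subgroup (Equiv.Perm (V n)) := sigmaSub n ⊤

/-- The affine group `AGL(V) = T ⋊ GL(V)`, consisting of the invertible affine
transformations `x ↦ L x + v` of `V`. -/
def AGL (n : ℕ) : Subgroup (Equiv.Perm (V n)) where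
  carrier := {g | ∃ (L : V n ≃ₗ[ZMod 2] V n) (v : V n), ∀ x, g x = L x + v}
  one_mem' := ⟨LinearEquiv.refl _ _, 0, fun x => by simp⟩
  mul_mem' := by
    rintro a b ⟨L, v, ha⟩ ⟨M, w, hb⟩
    exact ⟨M ≪≫ₗ L, L w + v, fun x => by
      simp [Equiv.Perm.mul_apply, ha, hb, map_add, add_assoc]⟩
  inv_mem' := by
    rintro a ⟨L, v, ha⟩
    refine ⟨L.symm, -(L.symm v), fun x => a.injective ?_⟩
    rw [Equiv.Perm.coe_inv, Equiv.apply_symm_apply, ha, map_add, map_neg, LinearEquiv.apply_symm_apply,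
      LinearEquiv.apply_symm_apply]
    abel

/-- The conjugate subgroup `H^g = g⁻¹ H g`. -/
def conjSub {G : Type*} [Group G] (H : Subgroup G) (g : G) : Subgroup G :=
  H.map (MulAut.conj g⁻¹).toMonoidHom

/-- A subgroup of `Sym(V)` is an elementary abelian regular subgroup if it is an
elementary abelian 2-group (every element squares to the identity) acting
regularly (sharply transitively) on `V`. -/
def IsElemAbelianRegular (n : ℕ) (R : Subgroup (Equiv.Perm (V n))) : Prop :=
  (∀ r ∈ R, r * r = 1) ∧ ∀ x y : V n, ∃! r : R, (r : Equiv.Perm (V n)) x = y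

/-- `A` is a normal subgroup of `B` (as subgroups of a common ambient group). -/
def NormalIn {G : Type*} [Group G] (A B : Subgroup G) : Prop :=
  A ≤ B ∧ ∀ b ∈ B, ∀ a ∈ A, b * a * b⁻¹ ∈ A

/-- `S` is a Sylow `2`-subgroup of `K` (as subgroups of a common ambient group):
`S` is a `2`-subgroup of `K` maximal among the `2`-subgroups of `K`. -/
def IsSylow2Of {G : Type*} [Group G] (S K : Subgroup G) : Prop :=
  S ≤ K ∧ IsPGroup 2 S ∧ ∀ Q : Subgroup G, Q ≤ K → IsPGroup 2 Q → S ≤ Q → Q = S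


set_option linter.unusedSectionVars false


section Aux

variable {K : Type*} [Field K] {E : Type*} [AddCommGroup E] [Module K E] [Finite E]

lemma decomp_unique {W U : Submodule K E} (h : IsCompl W U) {w w' : W} {u u' : U}
    (hx : (w : E) + u = (w' : E) + u') : w = w' ∧ u = u' := by
  have := (Submodule.prodEquivOfIsCompl W U h).injective
    (a₁ := (w, u)) (a₂ := (w', u')) (by
      rw [Submodule.coe_prodEquivOfIsCompl', Submodule.coe_prodEquivOfIsCompl']
      exact hx)
  exact ⟨congrArg Prod.fst this, congrArg Prod.snd this⟩

lemma card_equivariant {W U : Submodule K E} (h : IsCompl W U) :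
    Nat.card {g : Equiv.Perm E // ∀ w ∈ W, ∀ x : E, g (x + w) = g x + w}
      = Nat.card (Equiv.Perm U × (U → W)) := by
  classical
  set e := Submodule.prodEquivOfIsCompl W U h with he
  have hesymm : ∀ x : E, ((e.symm x).1 : E) + ((e.symm x).2 : E) = x := fun x => by
    conv_rhs => rw [← e.apply_symm_apply x]
    rw [Submodule.coe_prodEquivOfIsCompl']
  -- the underlying function of Ψ p
  set f : (Equiv.Perm U × (U → W)) → E → E := fun p x =>
    ((((e.symm x).1 + p.2 ((e.symm x).2)) : W) : E) + ((p.1 ((e.symm x).2) : U) : E) with hf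
  have hsymm_spec : ∀ (x : E) (w : W) (u : U), x = (w : E) + u → e.symm x = (w, u) := by
    intro x w u hx
    rw [LinearEquiv.symm_apply_eq, Submodule.coe_prodEquivOfIsCompl']
    exact hx
  have finj : ∀ p, Function.Injective (f p) := by
    intro p x x' hxx
    obtain ⟨h1, h2⟩ := decomp_unique h hxx
    have hu : (e.symm x).2 = (e.symm x').2 := p.1.injective h2
    have hw : (e.symm x).1 = (e.symm x').1 := by
      have := h1
      rw [hu] at this
      exact add_right_cancel this
    rw [← hesymm x, ← hesymm x', hu, hw]
  have fbij : ∀ p, Function.Bijective (f p) := fun p =>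
    Finite.injective_iff_bijective.mp (finj p)
  set Ψ : (Equiv.Perm U × (U → W)) →
      {g : Equiv.Perm E // ∀ w ∈ W, ∀ x : E, g (x + w) = g x + w} := fun p =>
    ⟨Equiv.ofBijective (f p) (fbij p), by
      intro w hw x
      show f p (x + w) = f p x + w
      have hd : e.symm (x + w) = ((e.symm x).1 + ⟨w, hw⟩, (e.symm x).2) := by
        apply hsymm_spec
        push_cast
        rw [show ((((e.symm x).1 : E) + w + ((e.symm x).2 : E)) : E)
            = (((e.symm x).1 : E) + ((e.symm x).2 : E)) + w by abel, hesymm x]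
      rw [hf]
      simp only [hd]
      push_cast
      abel⟩ with hΨ
  have hΨbij : Function.Bijective Ψ := by
    constructor
    · intro p p' hpp
      have hval : ∀ x : E, f p x = f p' x := fun x =>
        congrFun (congrArg (fun (g : {g : Equiv.Perm E // _}) => ((g : Equiv.Perm E) : E → E)) hpp) x
      have hkey : ∀ u : U, p.2 u = p'.2 u ∧ p.1 u = p'.1 u := by
        intro u
        have hu0 : e.symm (u : E) = (0, u) := hsymm_spec _ _ _ (by simp)
        have := hval (u : E)
        rw [hf] at this
        simp only [hu0, zero_add] at this
        exact decomp_unique h this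
      have h1 : p.1 = p'.1 := Equiv.ext fun u => (hkey u).2
      have h2 : p.2 = p'.2 := funext fun u => (hkey u).1
      exact Prod.ext h1 h2
    · rintro ⟨g, hg⟩
      set a : U → W := fun u => (e.symm (g (u : E))).1 with ha
      set q : U → U := fun u => (e.symm (g (u : E))).2 with hq
      have hgu : ∀ u : U, g (u : E) = ((a u : E)) + (q u : E) := fun u => (hesymm _).symm
      have hqinj : Function.Injective q := by
        intro u₁ u₂ h12
        have key : g ((u₂ : E) + ((a u₁ - a u₂ : W) : E)) = g (u₁ : E) := by
          rw [hg _ (a u₁ - a u₂).2, hgu u₁, hgu u₂, h12]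
          push_cast
          abel
        have := g.injective key
        have h2 : ((a u₁ - a u₂ : W) : E) + (u₂ : E) = ((0 : W) : E) + (u₁ : E) := by
          rw [← this]; push_cast; abel
        exact ((decomp_unique h h2).2).symm
      refine ⟨(Equiv.ofBijective q (Finite.injective_iff_bijective.mp hqinj), a), ?_⟩
      apply Subtype.ext
      apply Equiv.ext
      intro x
      show f _ x = g x
      rw [hf]
      have hx : x = (((e.symm x).1 : E)) + ((e.symm x).2 : E) := (hesymm x).symm
      conv_rhs => rw [hx]
      rw [add_comm ((((e.symm x).1 : W)) : E), hg _ (e.symm x).1.2, hgu]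
      simp only [Equiv.ofBijective_apply]
      push_cast
      abel
  exact (Nat.card_eq_of_bijective Ψ hΨbij).symm

end Aux


/-- translation permutation -/
def tr (n : ℕ) (v : V n) : Equiv.Perm (V n) := Equiv.addRight v

lemma tr_apply (n : ℕ) (v x : V n) : tr n v x = x + v := rfl

lemma tr_mul (n : ℕ) (a b : V n) : tr n a * tr n b = tr n (a + b) :=
  Equiv.ext fun x => by
    show (x + b) + a = x + (a + b)
    abel

lemma tr_zero (n : ℕ) : tr n 0 = 1 :=
  Equiv.ext fun x => by show x + 0 = x; simp

/-- the subgroup of `V` corresponding to a subgroup of translations -/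
def Wsub (n : ℕ) (M : Subgroup (Equiv.Perm (V n))) : Submodule (ZMod 2) (V n) where
  carrier := {v | tr n v ∈ M}
  add_mem' := by
    intro a b ha hb
    have := M.mul_mem ha hb
    rwa [tr_mul] at this
  zero_mem' := by
    show tr n 0 ∈ M
    rw [tr_zero]; exact M.one_mem
  smul_mem' := by
    intro c v hv
    have hc : c = 0 ∨ c = 1 := by revert c; decide
    rcases hc with rfl | rfl
    · show tr n ((0 : ZMod 2) • v) ∈ M
      rw [zero_smul, tr_zero]; exact M.one_mem
    · show tr n ((1 : ZMod 2) • v) ∈ M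
      rwa [one_smul]


/-- If `M ≤ T` has order `2^(n-m)`, then `|C_{Sym(V)}(M)| = (2^m)! · 2^(2^m (n-m))`. -/
theorem card_centralizer_of_subgroup_of_translations
    (n m : ℕ) (hn : 2 < n) (hm : m ≤ n)
    (M : Subgroup (Equiv.Perm (V n))) (hMT : M ≤ T n)
    (hcard : Nat.card M = 2 ^ (n - m)) :
    Nat.card (Subgroup.centralizer (M : Set (Equiv.Perm (V n)))) =
      Nat.factorial (2 ^ m) * 2 ^ (2 ^ m * (n - m)) := by
  classical
  set W := Wsub n M with hW
  have htr_mem : ∀ g ∈ M, tr n (g 0) = g := by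
    intro g hg
    obtain ⟨v, -, hv⟩ := hMT hg
    have h0 : g 0 = v := by simpa using hv 0
    refine Equiv.ext fun x => ?_
    rw [tr_apply, h0, hv x]
  have hMiff : ∀ g : Equiv.Perm (V n), g ∈ M ↔ ∃ v ∈ W, g = tr n v := by
    intro g
    constructor
    · intro hg
      exact ⟨g 0, by show tr n (g 0) ∈ M; rw [htr_mem g hg]; exact hg, (htr_mem g hg).symm⟩
    · rintro ⟨v, hv, rfl⟩; exact hv
  have hcent : ∀ g : Equiv.Perm (V n),
      g ∈ Subgroup.centralizer (M : Set (Equiv.Perm (V n))) ↔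
        ∀ w ∈ W, ∀ x, g (x + w) = g x + w := by
    intro g
    rw [Subgroup.mem_centralizer_iff]
    constructor
    · intro hc w hw x
      have hwM : tr n w ∈ M := hw
      have hx := DFunLike.congr_fun (hc (tr n w) hwM) x
      simpa [tr_apply, Equiv.Perm.mul_apply] using hx.symm
    · intro hc h hh
      obtain ⟨v, hv, rfl⟩ := (hMiff h).mp hh
      refine Equiv.ext fun x => ?_
      simp [Equiv.Perm.mul_apply, tr_apply, hc v hv x]
  have hWcard : Nat.card W = 2 ^ (n - m) := by
    rw [← hcard]
    apply Nat.card_congr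
    exact { toFun := fun w => ⟨tr n w.1, w.2⟩
            invFun := fun g => ⟨(g : Equiv.Perm (V n)) 0, by
              show tr n _ ∈ M
              rw [htr_mem _ g.2]; exact g.2⟩
            left_inv := fun w => by
              apply Subtype.ext
              show tr n w.1 0 = w.1
              simp [tr_apply]
            right_inv := fun g => by
              apply Subtype.ext
              exact htr_mem _ g.2 }
  obtain ⟨U, hU⟩ := Submodule.exists_isCompl W
  have hV : Nat.card (V n) = 2 ^ n := by
    rw [Nat.card_fun]
    simp
  have hWU : Nat.card W * Nat.card U = 2 ^ n := by
    rw [← hV, ← Nat.card_prod]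
    exact Nat.card_congr (Submodule.prodEquivOfIsCompl W U hU).toEquiv
  have hUcard : Nat.card U = 2 ^ m := by
    have h2 : Nat.card W * Nat.card U = Nat.card W * 2 ^ m := by
      rw [hWU, hWcard, ← pow_add, Nat.sub_add_cancel hm]
    refine Nat.eq_of_mul_eq_mul_left ?_ h2
    rw [hWcard]
    exact pow_pos two_pos _
  have hperm : Nat.card (Equiv.Perm U) = Nat.factorial (Nat.card U) := by
    have : Fintype U := Fintype.ofFinite _
    rw [Nat.card_eq_fintype_card, Nat.card_eq_fintype_card, Fintype.card_perm]
  have hc1 : Nat.card (Subgroup.centralizer (M : Set (Equiv.Perm (V n))))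
      = Nat.card {g : Equiv.Perm (V n) // ∀ w ∈ W, ∀ x, g (x + w) = g x + w} :=
    Nat.card_congr (Equiv.subtypeEquivRight hcent)
  rw [hc1, card_equivariant hU, Nat.card_prod, Nat.card_fun, hperm, hUcard, hWcard,
    ← pow_mul, Nat.mul_comm (n - m)]
end

section
/- Let n > 2, let V = 𝔽₂ⁿ, and let M be any maximal subgroup of the translation group T (i.e. a subgroup of index 2 in T). Then the centraliser C_{Sym(V)}(M) is a proper subgroup of the affine group AGL(V), and moreover |C_{Sym(V)}(M)| = 2^{2n−1}. -/
open Equiv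

namespace CentAux

lemma add_self {n : ℕ} (v : V n) : v + v = 0 := by
  funext i; exact CharTwo.add_self_eq_zero _

lemma zmod2 (c : ZMod 2) : c = 0 ∨ c = 1 := by revert c; decide

lemma zmod2' (c : ZMod 2) (h : c ≠ 0) : c = 1 := by revert c; decide

lemma addRight_mem_iff {n : ℕ} (W : Submodule (ZMod 2) (V n)) (v : V n) :
    Equiv.addRight v ∈ sigmaSub n W ↔ v ∈ W := by
  constructor
  · rintro ⟨u, hu, h⟩
    have := h 0
    simp only [Equiv.coe_addRight] at this
    have hv : v = u := by simpa using this
    rwa [hv]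
  · intro hv; exact ⟨v, hv, fun x => rfl⟩

/-- The submodule of vectors whose translation lies in `M`. -/
def Wof {n : ℕ} (M : Subgroup (Equiv.Perm (V n))) : Submodule (ZMod 2) (V n) where
  carrier := {v | Equiv.addRight v ∈ M}
  zero_mem' := by
    have h : Equiv.addRight (0 : V n) = 1 := by ext x; simp
    simp only [Set.mem_setOf_eq, h]
    exact one_mem M
  add_mem' := by
    intro a b ha hb
    have h : Equiv.addRight (a + b) = Equiv.addRight b * Equiv.addRight a := by
      ext x
      simp [Equiv.Perm.mul_apply, add_assoc]
    simpa only [Set.mem_setOf_eq, h] using mul_mem hb ha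
  smul_mem' := by
    intro c x hx
    rcases zmod2 c with h | h <;> subst h
    · have h0 : Equiv.addRight ((0 : ZMod 2) • x) = 1 := by ext y; simp
      simpa only [Set.mem_setOf_eq, h0] using one_mem M
    · simpa using hx

lemma M_eq {n : ℕ} (M : Subgroup (Equiv.Perm (V n))) (hMT : M ≤ T n) :
    M = sigmaSub n (Wof M) := by
  ext g
  constructor
  · intro hg
    obtain ⟨v, -, hv⟩ := hMT hg
    have hgv : g = Equiv.addRight v := Equiv.ext hv
    exact ⟨v, show Equiv.addRight v ∈ M from hgv ▸ hg, hv⟩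
  · rintro ⟨v, hv, hgv⟩
    have : g = Equiv.addRight v := Equiv.ext hgv
    rw [this]; exact hv

lemma card_sigmaSub {n : ℕ} (W : Submodule (ZMod 2) (V n)) :
    Nat.card (sigmaSub n W) = Nat.card W := by
  refine (Nat.card_eq_of_bijective
    (fun w : W => (⟨Equiv.addRight w.1, w.1, w.2, fun x => rfl⟩ : sigmaSub n W)) ⟨?_, ?_⟩).symm
  · intro w w' h
    have h0 := congrArg (fun g : sigmaSub n W => (g : Equiv.Perm (V n)) 0) h
    simp only [Equiv.coe_addRight] at h0
    exact Subtype.ext (by simpa using h0)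
  · rintro ⟨g, v, hv, hgv⟩
    refine ⟨⟨v, hv⟩, Subtype.ext (Equiv.ext fun x => ?_)⟩
    simp [hgv x]

lemma card_V {n : ℕ} : Nat.card (V n) = 2 ^ n := by
  simp [Nat.card_pi, Nat.card_eq_fintype_card]

lemma invol_eq {n : ℕ} (f : V n →ₗ[ZMod 2] ZMod 2) (d : V n) (hd : f d = 0) (x : V n) :
    (x + f x • d) + f (x + f x • d) • d = x := by
  have h1 : f (x + f x • d) = f x := by
    rw [map_add, map_smul, hd, smul_zero, add_zero]
  rw [h1, add_assoc, add_self, add_zero]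

/-- The linear involution `x ↦ x + f x • d` when `f d = 0`. -/
def involLE {n : ℕ} (f : V n →ₗ[ZMod 2] ZMod 2) (d : V n) (hd : f d = 0) :
    V n ≃ₗ[ZMod 2] V n :=
  LinearEquiv.ofLinear (LinearMap.id + f.smulRight d) (LinearMap.id + f.smulRight d)
    (LinearMap.ext fun x => by
      simpa [LinearMap.comp_apply, LinearMap.add_apply, LinearMap.smulRight_apply]
        using invol_eq f d hd x)
    (LinearMap.ext fun x => by
      simpa [LinearMap.comp_apply, LinearMap.add_apply, LinearMap.smulRight_apply]
        using invol_eq f d hd x)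

lemma involLE_apply {n : ℕ} (f : V n →ₗ[ZMod 2] ZMod 2) (d : V n) (hd : f d = 0) (x : V n) :
    involLE f d hd x = x + f x • d := by
  simp [involLE, LinearEquiv.ofLinear_apply, LinearMap.add_apply, LinearMap.smulRight_apply]

lemma coset_lemma {n : ℕ} (W : Submodule (ZMod 2) (V n)) (hQ : Nat.card (V n ⧸ W) = 2)
    {x y : V n} (hx : x ∉ W) (hy : y ∉ W) : x + y ∈ W := by
  obtain ⟨b, -, hb⟩ := (Nat.card_eq_two_iff' (0 : V n ⧸ W)).1 hQ
  have hx' : (Submodule.Quotient.mk x : V n ⧸ W) ≠ 0 := by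
    simpa [Submodule.Quotient.mk_eq_zero] using hx
  have hy' : (Submodule.Quotient.mk y : V n ⧸ W) ≠ 0 := by
    simpa [Submodule.Quotient.mk_eq_zero] using hy
  have hxy : (Submodule.Quotient.mk x : V n ⧸ W) = Submodule.Quotient.mk y :=
    (hb _ hx').trans (hb _ hy').symm
  have hz : (Submodule.Quotient.mk (x + y) : V n ⧸ W) = 0 := by
    rw [Submodule.Quotient.mk_add, hxy, ← Submodule.Quotient.mk_add, add_self,
      Submodule.Quotient.mk_zero]
  exact (Submodule.Quotient.mk_eq_zero W).1 hz

lemma exists_f {n : ℕ} (W : Submodule (ZMod 2) (V n)) (hQ : Nat.card (V n ⧸ W) = 2) :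
    ∃ f : V n →ₗ[ZMod 2] ZMod 2, ∀ x, f x = 0 ↔ x ∈ W := by
  classical
  refine ⟨{ toFun := fun x => if x ∈ W then 0 else 1,
            map_add' := ?_, map_smul' := ?_ }, fun x => ?_⟩
  · intro x y
    by_cases hx : x ∈ W <;> by_cases hy : y ∈ W
    · simp [hx, hy, W.add_mem hx hy]
    · have hxy : x + y ∉ W := fun h => hy (by
        have hm := W.add_mem h hx
        have e : (x + y) + x = y := by
          calc (x + y) + x = y + (x + x) := by abel
          _ = y := by rw [add_self, add_zero]
        rwa [e] at hm)
      simp [hx, hy, hxy]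
    · have hxy : x + y ∉ W := fun h => hx (by
        have hm := W.add_mem h hy
        have e : (x + y) + y = x := by
          calc (x + y) + y = x + (y + y) := by abel
          _ = x := by rw [add_self, add_zero]
        rwa [e] at hm)
      simp [hx, hy, hxy]
    · have hxy := coset_lemma W hQ hx hy
      simp only [if_pos hxy, if_neg hx, if_neg hy]
      decide
  · intro c x
    rcases zmod2 c with h | h <;> subst h
    · simp [W.zero_mem]
    · simp
  · by_cases h : x ∈ W <;> simp [h]

lemma mem_centralizer_iff' {n : ℕ} (M : Subgroup (Equiv.Perm (V n)))
    (W : Submodule (ZMod 2) (V n)) (hM : M = sigmaSub n W) (g : Equiv.Perm (V n)) :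
    g ∈ Subgroup.centralizer (M : Set (Equiv.Perm (V n))) ↔
      ∀ w ∈ W, ∀ x, g (x + w) = g x + w := by
  rw [Subgroup.mem_centralizer_iff]
  constructor
  · intro h w hw x
    have hm : Equiv.addRight w ∈ M := by rw [hM]; exact (addRight_mem_iff W w).2 hw
    have h2 := congrFun (congrArg (fun e : Equiv.Perm (V n) => (e : V n → V n)) (h _ hm)) x
    simpa [Equiv.Perm.mul_apply] using h2.symm
  · intro h m hm
    rw [hM] at hm
    obtain ⟨w, hw, hmw⟩ := hm
    refine Equiv.ext fun x => ?_
    simp only [Equiv.Perm.mul_apply, hmw]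
    exact (h w hw x).symm

lemma centralizer_char {n : ℕ} (M : Subgroup (Equiv.Perm (V n)))
    (W : Submodule (ZMod 2) (V n)) (hM : M = sigmaSub n W) (hQ : Nat.card (V n ⧸ W) = 2)
    (f : V n →ₗ[ZMod 2] ZMod 2) (hf : ∀ x, f x = 0 ↔ x ∈ W)
    (v₀ : V n) (hv₀ : v₀ ∉ W) (g : Equiv.Perm (V n)) :
    g ∈ Subgroup.centralizer (M : Set (Equiv.Perm (V n))) ↔
      ∃ d ∈ W, ∃ c : V n, ∀ x, g x = x + f x • d + c := by
  rw [mem_centralizer_iff' M W hM]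
  constructor
  · intro h
    have hgW : ∀ w ∈ W, g w = w + g 0 := by
      intro w hw
      have h0 := h w hw 0
      rw [zero_add] at h0
      rw [h0, add_comm]
    have hgv₀ : g v₀ = v₀ + (g v₀ + v₀ + g 0) + g 0 := by
      calc g v₀ = g v₀ + (v₀ + v₀) + (g 0 + g 0) := by
            rw [add_self, add_self, add_zero, add_zero]
      _ = v₀ + (g v₀ + v₀ + g 0) + g 0 := by abel
    have hdW : g v₀ + v₀ + g 0 ∈ W := by
      by_contra hdW
      have hvd : v₀ + (g v₀ + v₀ + g 0) ∈ W := coset_lemma W hQ hv₀ hdW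
      have h1 : g (v₀ + (g v₀ + v₀ + g 0)) = v₀ + (g v₀ + v₀ + g 0) + g 0 := hgW _ hvd
      have h2 : g v₀ = g (v₀ + (g v₀ + v₀ + g 0)) := by rw [h1, ← hgv₀]
      have h3 := g.injective h2
      have hd0 : g v₀ + v₀ + g 0 = 0 := by
        have h4 : v₀ + 0 = v₀ + (g v₀ + v₀ + g 0) := by rw [add_zero]; exact h3
        exact (add_left_cancel h4).symm
      rw [hd0] at hdW
      exact hdW W.zero_mem
    refine ⟨g v₀ + v₀ + g 0, hdW, g 0, fun x => ?_⟩
    by_cases hx : x ∈ W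
    · rw [hgW x hx, (hf x).2 hx, zero_smul, add_zero]
    · have hfx : f x = 1 := zmod2' _ (fun h0 => hx ((hf x).1 h0))
      have hw : x + v₀ ∈ W := coset_lemma W hQ hx hv₀
      have hx' : x = v₀ + (x + v₀) := by
        calc x = x + (v₀ + v₀) := by rw [add_self, add_zero]
        _ = v₀ + (x + v₀) := by abel
      rw [hfx, one_smul]
      calc g x = g (v₀ + (x + v₀)) := by rw [← hx']
      _ = g v₀ + (x + v₀) := by rw [h (x + v₀) hw v₀]
      _ = (v₀ + (g v₀ + v₀ + g 0) + g 0) + (x + v₀) := by rw [← hgv₀]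
      _ = x + (g v₀ + v₀ + g 0) + g 0 + (v₀ + v₀) := by abel
      _ = x + (g v₀ + v₀ + g 0) + g 0 := by rw [add_self, add_zero]
  · rintro ⟨d, hd, c, hg⟩
    intro w hw x
    have hfw : f w = 0 := (hf w).2 hw
    rw [hg, hg, map_add, hfw, add_zero]
    abel

lemma centralizer_le_AGL {n : ℕ} (M : Subgroup (Equiv.Perm (V n)))
    (W : Submodule (ZMod 2) (V n)) (hM : M = sigmaSub n W) (hQ : Nat.card (V n ⧸ W) = 2)
    (f : V n →ₗ[ZMod 2] ZMod 2) (hf : ∀ x, f x = 0 ↔ x ∈ W)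
    (v₀ : V n) (hv₀ : v₀ ∉ W) :
    Subgroup.centralizer (M : Set (Equiv.Perm (V n))) ≤ AGL n := by
  intro g hg
  obtain ⟨d, hd, c, hgx⟩ := (centralizer_char M W hM hQ f hf v₀ hv₀ g).1 hg
  exact ⟨involLE f d ((hf d).2 hd), c, fun x => by
    rw [hgx x, involLE_apply]⟩

lemma card_centralizer {n : ℕ} (M : Subgroup (Equiv.Perm (V n)))
    (W : Submodule (ZMod 2) (V n)) (hM : M = sigmaSub n W) (hQ : Nat.card (V n ⧸ W) = 2)
    (f : V n →ₗ[ZMod 2] ZMod 2) (hf : ∀ x, f x = 0 ↔ x ∈ W)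
    (v₀ : V n) (hv₀ : v₀ ∉ W) :
    Nat.card (Subgroup.centralizer (M : Set (Equiv.Perm (V n)))) =
      Nat.card W * Nat.card (V n) := by
  have hfv₀ : f v₀ = 1 := zmod2' _ (fun h0 => hv₀ ((hf v₀).1 h0))
  have key := fun g => centralizer_char M W hM hQ f hf v₀ hv₀ g
  rw [← Nat.card_prod]
  refine (Nat.card_eq_of_bijective (fun p : W × V n =>
      (⟨(Function.Involutive.toPerm (fun x => x + f x • p.1.1)
          (fun x => invol_eq f p.1.1 ((hf _).2 p.1.2) x)).trans (Equiv.addRight p.2),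
        (key _).2 ⟨p.1.1, p.1.2, p.2, fun x => rfl⟩⟩ :
        Subgroup.centralizer (M : Set (Equiv.Perm (V n))))) ⟨?_, ?_⟩).symm
  · rintro ⟨⟨d, hd⟩, c⟩ ⟨⟨d', hd'⟩, c'⟩ h
    have happ : ∀ x : V n, x + f x • d + c = x + f x • d' + c' := fun x =>
      congrFun (congrArg (fun e : Subgroup.centralizer (M : Set (Equiv.Perm (V n))) =>
        ((e : Equiv.Perm (V n)) : V n → V n)) h) x
    have h0 := happ 0
    simp only [map_zero, zero_smul, add_zero, zero_add] at h0
    have hv := happ v₀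
    simp only [hfv₀, one_smul, h0] at hv
    have hdd : d = d' := add_left_cancel (add_right_cancel hv)
    simp only [Prod.mk.injEq, Subtype.mk.injEq]
    exact ⟨hdd, h0⟩
  · rintro ⟨g, hg⟩
    obtain ⟨d, hd, c, hgx⟩ := (key g).1 hg
    exact ⟨(⟨d, hd⟩, c), Subtype.ext (Equiv.ext fun x => (hgx x).symm)⟩

end CentAux

/-- If `M` is a maximal subgroup of `T` (a subgroup of index `2` in `T`), then
`C_{Sym(V)}(M)` is a proper subgroup of `AGL(V)` of order `2^(2n-1)`. -/
theorem centralizer_of_maximal_subgroup_of_translations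
    (n : ℕ) (hn : 2 < n)
    (M : Subgroup (Equiv.Perm (V n))) (hMT : M ≤ T n)
    (hidx : M.relIndex (T n) = 2) :
    Subgroup.centralizer (M : Set (Equiv.Perm (V n))) < AGL n ∧
      Nat.card (Subgroup.centralizer (M : Set (Equiv.Perm (V n)))) = 2 ^ (2 * n - 1) := by
  classical
  obtain ⟨W, hM⟩ : ∃ W : Submodule (ZMod 2) (V n), M = sigmaSub n W :=
    ⟨CentAux.Wof M, CentAux.M_eq M hMT⟩
  have hcardTop : Nat.card (⊤ : Submodule (ZMod 2) (V n)) = 2 ^ n := by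
    rw [← CentAux.card_V (n := n)]
    exact Nat.card_congr Submodule.topEquiv.toEquiv
  have hcardT : Nat.card (T n) = 2 ^ n := by
    rw [T, CentAux.card_sigmaSub, hcardTop]
  have hcardM : Nat.card M * 2 = 2 ^ n := by
    have h1 : Nat.card (M.subgroupOf (T n)) * M.relIndex (T n) = Nat.card (T n) :=
      Subgroup.card_mul_index _
    rw [hidx, hcardT] at h1
    rwa [Nat.card_congr (Subgroup.subgroupOfEquivOfLe hMT).toEquiv] at h1
  have hcardW : Nat.card W = 2 ^ (n - 1) := by
    have h2 : Nat.card M = Nat.card W := by rw [hM, CentAux.card_sigmaSub]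
    have h3 : Nat.card W * 2 = 2 ^ n := by rw [← h2]; exact hcardM
    have h4 : (2 : ℕ) ^ n = 2 ^ (n - 1) * 2 := by
      rw [← pow_succ]
      congr 1
      omega
    omega
  have hQ : Nat.card (V n ⧸ W) = 2 := by
    have h1 : Nat.card W.toAddSubgroup * W.toAddSubgroup.index = Nat.card (V n) :=
      AddSubgroup.card_mul_index _
    have h1' : Nat.card W * W.toAddSubgroup.index = 2 ^ n := by
      rwa [CentAux.card_V] at h1
    have h4 : (2 : ℕ) ^ n = 2 ^ (n - 1) * 2 := by
      rw [← pow_succ]; congr 1; omega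
    have hpos : 0 < (2 : ℕ) ^ (n - 1) := Nat.pow_pos (by norm_num)
    have h5 : W.toAddSubgroup.index = 2 := by
      have h6 : (2 : ℕ) ^ (n - 1) * W.toAddSubgroup.index = 2 ^ (n - 1) * 2 := by
        rw [← hcardW, h1', h4, hcardW]
      exact Nat.eq_of_mul_eq_mul_left hpos h6
    have hrfl : Nat.card (V n ⧸ W) = W.toAddSubgroup.index := rfl
    rw [hrfl, h5]
  obtain ⟨f, hf⟩ := CentAux.exists_f W hQ
  have hWtop : W ≠ ⊤ := by
    intro h
    rw [h, hcardTop] at hcardW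
    have := Nat.pow_right_injective (le_refl 2) hcardW
    omega
  obtain ⟨v₀, hv₀⟩ : ∃ v₀, v₀ ∉ W := by
    by_contra h
    push_neg at h
    exact hWtop (Submodule.eq_top_iff'.2 h)
  constructor
  · rw [SetLike.lt_iff_le_and_exists]
    refine ⟨CentAux.centralizer_le_AGL M W hM hQ f hf v₀ hv₀, ?_⟩
    -- construct an element of AGL not centralizing M
    obtain ⟨w, hwW, hw0⟩ : ∃ w ∈ W, w ≠ 0 := by
      refine Submodule.exists_mem_ne_zero_of_ne_bot ?_
      intro h
      rw [h] at hcardW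
      have hb : Nat.card (⊥ : Submodule (ZMod 2) (V n)) = 1 := by simp
      rw [hb] at hcardW
      have : 1 < 2 ^ (n - 1) := Nat.one_lt_two_pow (by omega)
      omega
    obtain ⟨i, hi⟩ : ∃ i, w i ≠ 0 := Function.ne_iff.1 hw0
    have hwi : w i = 1 := CentAux.zmod2' _ hi
    have h0n : (0 : ℕ) < n := by omega
    have h1n : (1 : ℕ) < n := by omega
    set j : Fin n := if i = ⟨0, h0n⟩ then ⟨1, h1n⟩ else ⟨0, h0n⟩ with hj
    have hji : j ≠ i := by
      rcases eq_or_ne i ⟨0, h0n⟩ with h | h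
      · rw [hj, if_pos h, h]
        intro hc
        exact absurd (congrArg Fin.val hc) (by simp)
      · rw [hj, if_neg h]
        exact fun hc => h hc.symm
    set c₀ : V n := Pi.single j (1 : ZMod 2) with hc₀def
    have hc₀i : c₀ i = 0 := Pi.single_eq_of_ne hji.symm 1
    have hc₀ : c₀ ≠ 0 := by
      intro h
      have h1 := congrFun h j
      rw [hc₀def] at h1
      simp only [Pi.single_eq_same, Pi.zero_apply] at h1
      exact one_ne_zero h1
    have hψc₀ : (LinearMap.proj i : V n →ₗ[ZMod 2] ZMod 2) c₀ = 0 := hc₀i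
    set Leq := CentAux.involLE (LinearMap.proj i) c₀ hψc₀ with hLeq
    refine ⟨Leq.toEquiv, ⟨Leq, 0, fun x => (add_zero _).symm⟩, ?_⟩
    intro hC
    have h := (CentAux.mem_centralizer_iff' M W hM _).1 hC w hwW 0
    rw [zero_add] at h
    have hL0 : Leq.toEquiv (0 : V n) = 0 := by
      simp only [LinearEquiv.coe_toEquiv]
      exact map_zero Leq
    have hLw : Leq.toEquiv w = w + c₀ := by
      simp only [LinearEquiv.coe_toEquiv]
      rw [hLeq, CentAux.involLE_apply]
      have : (LinearMap.proj i : V n →ₗ[ZMod 2] ZMod 2) w = 1 := hwi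
      rw [this, one_smul]
    rw [hLw, hL0, zero_add] at h
    have : w + c₀ = w + 0 := by rw [add_zero]; exact h
    exact hc₀ (add_left_cancel this)
  · rw [CentAux.card_centralizer M W hM hQ f hf v₀ hv₀, hcardW, CentAux.card_V, ← pow_add]
    congr 1
    omega
end

section
/- Let n > 2, let V = 𝔽₂ⁿ, and let W ≤ V be a subspace with dim(W) = n − 2. Let φ ∈ Sym(V) be an involution which centralises σ_W and which does not fix setwise any of the four cosets of W in V. Then φ ∈ AGL(V), i.e. φ is an affine transformation of V. -/
open Equiv

/-- An involution of `Sym(V)` centralising `σ_W`, where `dim W = n - 2`, which does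
not fix setwise any of the cosets of `W` in `V`, is an affine transformation. -/
theorem involution_centralizing_sigmaW_not_fixing_cosets_mem_AGL
    (n : ℕ) (hn : 2 < n)
    (W : Submodule (ZMod 2) (V n)) (hdim : Module.finrank (ZMod 2) W = n - 2)
    (φ : Equiv.Perm (V n)) (hinv : φ * φ = 1) (hne : φ ≠ 1)
    (hcent : φ ∈ Subgroup.centralizer (sigmaSub n W : Set (Equiv.Perm (V n))))
    (hcosets : ∀ v : V n, (fun x => φ x) '' {x : V n | x - v ∈ W} ≠ {x : V n | x - v ∈ W}) :
    φ ∈ AGL n := by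
  classical
  -- characteristic two facts
  have hchar : ∀ v : V n, v + v = 0 := fun v => by
    funext i
    show v i + v i = 0
    exact CharTwo.add_self_eq_zero (v i)
  have hsub : ∀ x y : V n, x - y = x + y := fun x y => by
    rw [sub_eq_add_neg]
    congr 1
    funext i
    exact CharTwo.neg_eq (y i)
  have hcancel : ∀ x y : V n, x + (y + x) = y := fun x y => by
    rw [add_comm y x, ← add_assoc, hchar, zero_add]
  have hcancel2 : ∀ x y : V n, x + (x + y) = y := fun x y => by
    rw [← add_assoc, hchar, zero_add]
  have hkey : ∀ p q r : V n, (p + r) + (q + r) = p + q := fun p q r => by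
    rw [add_add_add_comm, hchar, add_zero]
  have hzmod : ∀ ε : ZMod 2, ε = 0 ∨ ε = 1 := by decide
  -- φ is an involution pointwise
  have hφφ : ∀ x, φ (φ x) = x := fun x => by
    have h := congrArg (fun g : Equiv.Perm (V n) => g x) hinv
    simpa using h
  -- φ commutes with translations by W
  have hT : ∀ w ∈ W, ∀ x, φ (x + w) = φ x + w := by
    intro w hw x
    have hg : (Equiv.addRight w) ∈ (sigmaSub n W : Set (Equiv.Perm (V n))) :=
      ⟨w, hw, fun y => rfl⟩
    have h := Subgroup.mem_centralizer_iff.mp hcent _ hg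
    have h' := congrArg (fun g : Equiv.Perm (V n) => g x) h
    simpa using h'.symm
  set f : V n → V n := fun x => φ x + x with hf
  have hφx : ∀ x, φ x = x + f x := fun x => (hcancel x (φ x)).symm
  have hfW : ∀ x : V n, ∀ w ∈ W, f (x + w) = f x := by
    intro x w hw
    show φ (x + w) + (x + w) = φ x + x
    rw [hT w hw x, hkey]
  have hfφ : ∀ x, f (φ x) = f x := fun x => by
    show φ (φ x) + φ x = φ x + x
    rw [hφφ, add_comm]
  -- f never lands in W
  have hfnot : ∀ v : V n, f v ∉ W := by
    intro v hv
    apply hcosets v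
    have hconst : ∀ x : V n, x - v ∈ W → f x = f v := by
      intro x hx
      have hx' : x + v ∈ W := by rwa [hsub] at hx
      have h := hfW v (x + v) hx'
      rwa [hcancel] at h
    apply Set.Subset.antisymm
    · rintro y ⟨x, hx, rfl⟩
      show φ x - v ∈ W
      rw [hsub, hφx, hconst x hx, add_right_comm]
      exact W.add_mem (by rw [← hsub]; exact hx) hv
    · intro y hy
      refine ⟨φ y, ?_, hφφ y⟩
      show φ y - v ∈ W
      rw [hsub, hφx, hconst y hy, add_right_comm]
      exact W.add_mem (by rw [← hsub]; exact hy) hv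
  set a : V n := f 0 with ha
  have haW : a ∉ W := hfnot 0
  have ha0 : a ≠ 0 := fun h => haW (h ▸ W.zero_mem)
  have hφ0 : φ 0 = a := by rw [hφx 0, zero_add]
  have hfa : f a = a := by
    have h := hfφ 0
    rwa [hφ0] at h
  set U : Submodule (ZMod 2) (V n) := W ⊔ Submodule.span (ZMod 2) {a} with hU
  have hWU : W ≤ U := le_sup_left
  have haU : a ∈ U := Submodule.mem_sup_right (Submodule.mem_span_singleton_self a)
  have hUmem : ∀ x ∈ U, ∃ w ∈ W, x = w ∨ x = w + a := by
    intro x hx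
    rcases Submodule.mem_sup.mp hx with ⟨w, hw, s, hs, rfl⟩
    rcases Submodule.mem_span_singleton.mp hs with ⟨ε, rfl⟩
    rcases hzmod ε with h | h
    · exact ⟨w, hw, Or.inl (by rw [h, zero_smul, add_zero])⟩
    · exact ⟨w, hw, Or.inr (by rw [h, one_smul])⟩
  have hfU : ∀ x ∈ U, f x = a := by
    intro x hx
    rcases hUmem x hx with ⟨w, hw, h1 | h1⟩
    · rw [h1]
      have h := hfW 0 w hw
      rwa [zero_add] at h
    · rw [h1, add_comm w a, hfW a w hw, hfa]
  -- dimension computations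
  have hVr : Module.finrank (ZMod 2) (V n) = n := by
    rw [Module.finrank_pi, Fintype.card_fin]
  have hinf : W ⊓ Submodule.span (ZMod 2) {a} = ⊥ := by
    rw [eq_bot_iff]
    intro x hx
    rw [Submodule.mem_inf] at hx
    obtain ⟨hxW, hxs⟩ := hx
    rcases Submodule.mem_span_singleton.mp hxs with ⟨ε, rfl⟩
    rcases hzmod ε with h | h
    · rw [h, zero_smul]; exact Submodule.zero_mem ⊥
    · exact absurd (by rwa [h, one_smul] at hxW) haW
  have hUr : Module.finrank (ZMod 2) U = n - 1 := by
    have h := Submodule.finrank_sup_add_finrank_inf_eq W (Submodule.span (ZMod 2) {a})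
    rw [hinf, finrank_bot, add_zero, hdim, finrank_span_singleton ha0] at h
    rw [← hU] at h
    omega
  have hUtop : U ≠ ⊤ := by
    intro h
    have h2 := hUr
    rw [h, finrank_top, hVr] at h2
    omega
  obtain ⟨c, hc⟩ : ∃ c : V n, c ∉ U := by
    by_contra h
    push_neg at h
    exact hUtop (Submodule.eq_top_iff'.mpr h)
  -- U has index two
  have index2 : ∀ x ∉ U, ∀ y ∉ U, x + y ∈ U := by
    intro x hx y hy
    have hlt : U < U ⊔ Submodule.span (ZMod 2) {x} :=
      lt_of_le_of_ne le_sup_left (fun h =>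
        hx (h ▸ Submodule.mem_sup_right (Submodule.mem_span_singleton_self x)))
    have h1 : n - 1 < Module.finrank (ZMod 2) ↥(U ⊔ Submodule.span (ZMod 2) {x}) := by
      have h0 := Submodule.finrank_lt_finrank_of_lt hlt
      rwa [hUr] at h0
    have h2 : Module.finrank (ZMod 2) ↥(U ⊔ Submodule.span (ZMod 2) {x}) ≤ n := by
      have h0 := Submodule.finrank_le (U ⊔ Submodule.span (ZMod 2) {x})
      rwa [hVr] at h0
    have htop : U ⊔ Submodule.span (ZMod 2) {x} = ⊤ := by
      apply Submodule.eq_top_of_finrank_eq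
      rw [hVr]; omega
    have hy' : y ∈ U ⊔ Submodule.span (ZMod 2) {x} := htop ▸ Submodule.mem_top
    rcases Submodule.mem_sup.mp hy' with ⟨u, hu, s, hs, rfl⟩
    rcases Submodule.mem_span_singleton.mp hs with ⟨ε, rfl⟩
    rcases hzmod ε with h | h
    · rw [h, zero_smul, add_zero] at hy ⊢
      exact absurd hu hy
    · rw [h, one_smul, add_comm u x, ← add_assoc, hchar, zero_add]
      exact hu
  set b : V n := f c with hb
  have hbW : b ∉ W := hfnot c
  have hφc : φ c = c + b := hφx c
  have hfcb : f (c + b) = b := by rw [hb, ← hφx c, hfφ]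
  have hcbU : c + b ∉ U := by
    intro h
    have hab : a = b := by rw [← hfU _ h, hfcb]
    apply hc
    have h2 : (c + b) + b ∈ U := U.add_mem h (hab ▸ haU)
    rwa [add_assoc, hchar, add_zero] at h2
  have hbU : b ∈ U := by
    have h := index2 (c + b) hcbU c hc
    rwa [add_right_comm, hchar, zero_add] at h
  have habW : a + b ∈ W := by
    rcases hUmem b hbU with ⟨w, hw, h1 | h1⟩
    · exact absurd (h1 ▸ hw) hbW
    · rw [h1, hcancel]
      exact hw
  -- f is b outside U
  have hfout : ∀ x ∉ U, f x = b := by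
    intro x hx
    have hxc : x + c ∈ U := index2 x hx c hc
    rcases hUmem (x + c) hxc with ⟨w, hw, hxw | hxw⟩
    · have hx' : x = c + w := by rw [← hxw, hcancel]
      rw [hx', hfW c w hw]
    · have h1 : x = w + a + c := by rw [← hxw, add_assoc, hchar, add_zero]
      have hx' : x = (c + b) + ((a + b) + w) := by
        rw [h1, show (c + b) + ((a + b) + w) = w + a + c + (b + b) from by abel, hchar, add_zero]
      rw [hx', hfW (c + b) _ (W.add_mem habW hw), hfcb]
  -- build the linear part
  have habU : a + b ∈ U := hWU habW
  set g : V n → V n := fun x => x + (if x ∈ U then 0 else a + b) with hg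
  have gid : ∀ x ∈ U, g x = x := fun x hx => by simp [hg, hx]
  have gout : ∀ x ∉ U, g x = x + (a + b) := fun x hx => by simp [hg, hx]
  have gadd : ∀ x y, g (x + y) = g x + g y := by
    intro x y
    by_cases hx : x ∈ U <;> by_cases hy : y ∈ U
    · rw [gid x hx, gid y hy, gid _ (U.add_mem hx hy)]
    · have hxy : x + y ∉ U := fun h => hy (by
        have h2 := U.add_mem hx h
        rwa [hcancel2] at h2)
      rw [gid x hx, gout y hy, gout _ hxy]
      abel
    · have hxy : x + y ∉ U := fun h => hx (by
        have h2 := U.add_mem h hy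
        rwa [add_assoc, hchar, add_zero] at h2)
      rw [gout x hx, gid y hy, gout _ hxy]
      abel
    · rw [gout x hx, gout y hy, gid _ (index2 x hx y hy), hkey]
  have gsmul : ∀ (ε : ZMod 2) (x : V n), g (ε • x) = ε • g x := by
    intro ε x
    rcases hzmod ε with h | h
    · rw [h, zero_smul, zero_smul, gid 0 U.zero_mem]
    · rw [h, one_smul, one_smul]
  have ginv : ∀ x, g (g x) = x := by
    intro x
    by_cases hx : x ∈ U
    · rw [gid x hx, gid x hx]
    · have h2 : x + (a + b) ∉ U := fun h => hx (by
        have h3 := U.add_mem h habU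
        rwa [add_assoc, hchar, add_zero] at h3)
      rw [gout x hx, gout _ h2, add_assoc, hchar, add_zero]
  let M : V n →ₗ[ZMod 2] V n :=
    { toFun := g, map_add' := gadd, map_smul' := gsmul }
  have hMM : M.comp M = LinearMap.id := LinearMap.ext fun x => ginv x
  refine ⟨LinearEquiv.ofLinear M M hMM hMM, a, fun x => ?_⟩
  show φ x = g x + a
  by_cases hx : x ∈ U
  · rw [hφx, hfU x hx, gid x hx]
  · rw [hφx, hfout x hx, gout x hx, add_assoc,
      show (a + b) + a = b by rw [add_right_comm, hchar, zero_add]]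
end
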